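/- arXiv:1612.03262 — 2 statements merged into one kernel-verified Lean document; each statement's English description precedes it below -/
import Mathlib

section
/- The Kac–Paljutkin algebra H_8 has, up to isomorphism, exactly five simple left modules: the four one-dimensional modules V_1(b) for b ∈ {1, -1, i, -i}, on which x and y act by the scalar b^2 and z acts by the scalar b, and the two-dimensional module V_2 with basis v1, v2 and actions x·v1 = v2, x·v2 = v1, y·v1 = -v2, y·v2 = -v1, z·v1 = v1, z·v2 = -v2. These five modules are simple, pairwise non-isomorphic, and every simple left H_8-module is isomorphic to one of them. -/
open TensorProduct Coalgebra

noncomputable section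

/-- The Kac–Paljutkin algebra structure: a Hopf algebra `H` over `K` together with
generators `x, y, z` satisfying the defining relations of `H₈`, such that
`1, x, y, xy, z, xz, yz, xyz` is a linear basis, with the prescribed
comultiplication, counit and antipode values. -/
structure KPAlg (K : Type*) (H : Type*) [Field K] [Ring H] [HopfAlgebra K H] where
  x : H
  y : H
  z : H
  basis_indep : LinearIndependent K
    ![(1 : H), x, y, x*y, z, x*z, y*z, x*y*z]
  basis_span : Submodule.span K
    (Set.range ![(1 : H), x, y, x*y, z, x*z, y*z, x*y*z]) = ⊤
  x_sq : x^2 = 1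
  y_sq : y^2 = 1
  xy_comm : x*y = y*x
  zx : z*x = y*z
  zy : z*y = x*z
  z_sq : z^2 = (2:K)⁻¹ • (1 + x + y - x*y)
  comul_x : comul (R := K) x = x ⊗ₜ[K] x
  comul_y : comul (R := K) y = y ⊗ₜ[K] y
  comul_z : comul (R := K) z =
    (2:K)⁻¹ • (z ⊗ₜ[K] z + z ⊗ₜ[K] (x*z) + (y*z) ⊗ₜ[K] z - (y*z) ⊗ₜ[K] (x*z))
  counit_x : counit (R := K) x = 1
  counit_y : counit (R := K) y = 1
  counit_z : counit (R := K) z = 1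
  antipode_x : HopfAlgebra.antipode (R := K) x = x
  antipode_y : HopfAlgebra.antipode (R := K) y = y
  antipode_z : HopfAlgebra.antipode (R := K) z = z

end



noncomputable section

open TensorProduct

variable (K : Type*) (H : Type*) [Field K] [Ring H] [HopfAlgebra K H]

/-- The data of a candidate left `H`-module structure on a `K`-vector space:
a `K`-bilinear action of `H`. -/
structure PreMod (M : Type*) [AddCommGroup M] [Module K M] where
  act : H →ₗ[K] M →ₗ[K] M

namespace PreMod

variable {K H}
variable {M : Type*} [AddCommGroup M] [Module K M]
variable {N : Type*} [AddCommGroup N] [Module K N]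

/-- The axioms making a `PreMod` a genuine left `H`-module. -/
def IsMod (Q : PreMod K H M) : Prop :=
  (∀ m : M, Q.act 1 m = m) ∧
  (∀ g h : H, ∀ m : M, Q.act (g * h) m = Q.act g (Q.act h m))

/-- Isomorphism of `H`-module data: an `H`-equivariant `K`-linear equivalence. -/
def Equiv (Q : PreMod K H M) (Q' : PreMod K H N) : Prop :=
  ∃ f : M ≃ₗ[K] N, ∀ (h : H) (m : M), f (Q.act h m) = Q'.act h (f m)

/-- A module is simple if it is nonzero and has no nonzero proper `H`-submodule. -/
def IsSimple (Q : PreMod K H M) : Prop :=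
  (∃ m : M, m ≠ 0) ∧
  ∀ S : Submodule K M, (∀ h : H, ∀ m ∈ S, Q.act h m ∈ S) → S = ⊥ ∨ S = ⊤

end PreMod

variable {K H}

/-- The one-dimensional simple `H₈`-module `V₁(b)`:
`x·v = b²v`, `y·v = b²v`, `z·v = bv`. -/
def KPAlg.IsV1 (P : KPAlg K H) (b : K) (Q : PreMod K H K) : Prop :=
  (∀ v : K, Q.act P.x v = b ^ 2 * v) ∧
  (∀ v : K, Q.act P.y v = b ^ 2 * v) ∧
  (∀ v : K, Q.act P.z v = b * v)

/-- The two-dimensional simple `H₈`-module `V₂`: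
`x·v₁ = v₂`, `x·v₂ = v₁`, `y·v₁ = -v₂`, `y·v₂ = -v₁`, `z·v₁ = v₁`, `z·v₂ = -v₂`. -/
def KPAlg.IsV2 (P : KPAlg K H) (Q : PreMod K H (K × K)) : Prop :=
  Q.act P.x ((1:K), (0:K)) = ((0:K), (1:K)) ∧
  Q.act P.x ((0:K), (1:K)) = ((1:K), (0:K)) ∧
  Q.act P.y ((1:K), (0:K)) = -((0:K), (1:K)) ∧
  Q.act P.y ((0:K), (1:K)) = -((1:K), (0:K)) ∧
  Q.act P.z ((1:K), (0:K)) = ((1:K), (0:K)) ∧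
  Q.act P.z ((0:K), (1:K)) = -((0:K), (1:K))

end

noncomputable section KPAux1

section NF
variable {A : Type*} [Ring A]
lemma nf_cancel {a b : A} (h : a*b = 1) (t : A) : a*(b*t) = t := by
  rw [← mul_assoc, h, one_mul]
lemma nf_move {a b c d : A} (h : a*b = c*d) (t : A) : a*(b*t) = c*(d*t) := by
  rw [← mul_assoc, h, mul_assoc]
end NF


variable {K : Type*} {H : Type*} [Field K] [Ring H] [HopfAlgebra K H]

namespace KPAlg
variable (P : KPAlg K H)

def basis : Module.Basis (Fin 8) K H :=
  Module.Basis.mk P.basis_indep (by rw [P.basis_span])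

lemma basis_apply (j : Fin 8) :
    P.basis j = ![(1 : H), P.x, P.y, P.x*P.y, P.z, P.x*P.z, P.y*P.z, P.x*P.y*P.z] j := by
  simp [basis]

lemma hxx : P.x * P.x = 1 := by rw [← pow_two]; exact P.x_sq
lemma hyy : P.y * P.y = 1 := by rw [← pow_two]; exact P.y_sq
lemma hzz : P.z * P.z = (2:K)⁻¹ • (1 + P.x + P.y - P.x*P.y) := by
  rw [← pow_two]; exact P.z_sq

variable {A : Type*} [Ring A] [Algebra K A]

def rep (X Y Z : A) : H →ₗ[K] A :=
  P.basis.constr K ![1, X, Y, X*Y, Z, X*Z, Y*Z, X*Y*Z]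

variable (X Y Z : A)

lemma rep_val (j : Fin 8) :
    P.rep X Y Z (![(1 : H), P.x, P.y, P.x*P.y, P.z, P.x*P.z, P.y*P.z, P.x*P.y*P.z] j)
      = ![1, X, Y, X*Y, Z, X*Z, Y*Z, X*Y*Z] j := by
  rw [← P.basis_apply j]; exact P.basis.constr_basis K _ j

lemma rep_one : P.rep X Y Z 1 = 1 := by simpa using P.rep_val X Y Z 0
lemma rep_x : P.rep X Y Z P.x = X := by simpa using P.rep_val X Y Z 1
lemma rep_y : P.rep X Y Z P.y = Y := by simpa using P.rep_val X Y Z 2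
lemma rep_xy : P.rep X Y Z (P.x*P.y) = X*Y := by simpa using P.rep_val X Y Z 3
lemma rep_z : P.rep X Y Z P.z = Z := by simpa using P.rep_val X Y Z 4
lemma rep_xz : P.rep X Y Z (P.x*P.z) = X*Z := by simpa using P.rep_val X Y Z 5
lemma rep_yz : P.rep X Y Z (P.y*P.z) = Y*Z := by simpa using P.rep_val X Y Z 6
lemma rep_xyz : P.rep X Y Z (P.x*(P.y*P.z)) = X*(Y*Z) := by
  rw [← mul_assoc]
  simpa [mul_assoc] using P.rep_val X Y Z 7

end KPAlg

namespace KPAlg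
variable {K : Type*} {H : Type*} [Field K] [Ring H] [HopfAlgebra K H]
variable (P : KPAlg K H)
variable {A : Type*} [Ring A] [Algebra K A]

theorem rep_mul {X Y Z : A} (hX : X*X = 1) (hY : Y*Y = 1) (hYX : Y*X = X*Y)
    (hZX : Z*X = Y*Z) (hZY : Z*Y = X*Z)
    (hZZ : Z*Z = (2:K)⁻¹ • (1 + X + Y - X*Y)) (g h : H) :
    P.rep X Y Z (g*h) = P.rep X Y Z g * P.rep X Y Z h := by
  have main : ((LinearMap.mul K H).compr₂ (P.rep X Y Z))
      = (LinearMap.mul K A).compl₁₂ (P.rep X Y Z) (P.rep X Y Z) := by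
    refine P.basis.ext fun j => P.basis.ext fun k => ?_
    have exx := nf_cancel P.hxx
    have eyy := nf_cancel P.hyy
    have eyx := nf_move (P.xy_comm.symm)
    have ezx := nf_move P.zx
    have ezy := nf_move P.zy
    have hzz' := P.hzz
    have aXX := nf_cancel hX
    have aYY := nf_cancel hY
    have aYX := nf_move hYX
    have aZX := nf_move hZX
    have aZY := nf_move hZY
    have wh0 : (![(1:H), P.x, P.y, P.x*P.y, P.z, P.x*P.z, P.y*P.z, P.x*P.y*P.z]) (⟨0, by norm_num⟩ : Fin 8) = (1:H) := rfl
    have wa0 : (![(1:A), X, Y, X*Y, Z, X*Z, Y*Z, X*Y*Z]) (⟨0, by norm_num⟩ : Fin 8) = (1:A) := rfl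
    have wh1 : (![(1:H), P.x, P.y, P.x*P.y, P.z, P.x*P.z, P.y*P.z, P.x*P.y*P.z]) (⟨1, by norm_num⟩ : Fin 8) = P.x := rfl
    have wa1 : (![(1:A), X, Y, X*Y, Z, X*Z, Y*Z, X*Y*Z]) (⟨1, by norm_num⟩ : Fin 8) = X := rfl
    have wh2 : (![(1:H), P.x, P.y, P.x*P.y, P.z, P.x*P.z, P.y*P.z, P.x*P.y*P.z]) (⟨2, by norm_num⟩ : Fin 8) = P.y := rfl
    have wa2 : (![(1:A), X, Y, X*Y, Z, X*Z, Y*Z, X*Y*Z]) (⟨2, by norm_num⟩ : Fin 8) = Y := rfl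
    have wh3 : (![(1:H), P.x, P.y, P.x*P.y, P.z, P.x*P.z, P.y*P.z, P.x*P.y*P.z]) (⟨3, by norm_num⟩ : Fin 8) = P.x*P.y := rfl
    have wa3 : (![(1:A), X, Y, X*Y, Z, X*Z, Y*Z, X*Y*Z]) (⟨3, by norm_num⟩ : Fin 8) = X*Y := rfl
    have wh4 : (![(1:H), P.x, P.y, P.x*P.y, P.z, P.x*P.z, P.y*P.z, P.x*P.y*P.z]) (⟨4, by norm_num⟩ : Fin 8) = P.z := rfl
    have wa4 : (![(1:A), X, Y, X*Y, Z, X*Z, Y*Z, X*Y*Z]) (⟨4, by norm_num⟩ : Fin 8) = Z := rfl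
    have wh5 : (![(1:H), P.x, P.y, P.x*P.y, P.z, P.x*P.z, P.y*P.z, P.x*P.y*P.z]) (⟨5, by norm_num⟩ : Fin 8) = P.x*P.z := rfl
    have wa5 : (![(1:A), X, Y, X*Y, Z, X*Z, Y*Z, X*Y*Z]) (⟨5, by norm_num⟩ : Fin 8) = X*Z := rfl
    have wh6 : (![(1:H), P.x, P.y, P.x*P.y, P.z, P.x*P.z, P.y*P.z, P.x*P.y*P.z]) (⟨6, by norm_num⟩ : Fin 8) = P.y*P.z := rfl
    have wa6 : (![(1:A), X, Y, X*Y, Z, X*Z, Y*Z, X*Y*Z]) (⟨6, by norm_num⟩ : Fin 8) = Y*Z := rfl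
    have wh7 : (![(1:H), P.x, P.y, P.x*P.y, P.z, P.x*P.z, P.y*P.z, P.x*P.y*P.z]) (⟨7, by norm_num⟩ : Fin 8) = P.x*P.y*P.z := rfl
    have wa7 : (![(1:A), X, Y, X*Y, Z, X*Z, Y*Z, X*Y*Z]) (⟨7, by norm_num⟩ : Fin 8) = X*Y*Z := rfl
    simp only [LinearMap.compr₂_apply, LinearMap.compl₁₂_apply, LinearMap.mul_apply',
      basis_apply]
    fin_cases j <;> fin_cases k <;>
      simp only [wh0, wa0, wh1, wa1, wh2, wa2, wh3, wa3, wh4, wa4, wh5, wa5, wh6, wa6, wh7, wa7] <;>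
      simp [mul_assoc, P.hxx, P.hyy, P.xy_comm.symm, P.zx, P.zy, hzz', exx, eyy, eyx, ezx, ezy,
        hX, hY, hYX, hZX, hZY, hZZ, aXX, aYY, aYX, aZX, aZY,
        mul_add, add_mul, mul_sub, sub_mul, mul_smul_comm, smul_mul_assoc,
        map_add, map_sub, map_smul, rep_one, rep_x, rep_y, rep_xy, rep_z, rep_xz, rep_yz, rep_xyz,
        mul_one, one_mul]
  exact LinearMap.congr_fun (LinearMap.congr_fun main g) h

end KPAlg

namespace KPAlg
variable (P : KPAlg K H)

lemma span_all {T : Submodule K H} (h1 : (1:H) ∈ T) (hx : P.x ∈ T) (hy : P.y ∈ T)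
    (hz : P.z ∈ T) (hmul : ∀ a b : H, a ∈ T → b ∈ T → a*b ∈ T) : ∀ h : H, h ∈ T := by
  intro h
  have hle : Submodule.span K
      (Set.range ![(1 : H), P.x, P.y, P.x*P.y, P.z, P.x*P.z, P.y*P.z, P.x*P.y*P.z]) ≤ T := by
    refine Submodule.span_le.2 ?_
    rintro _ ⟨j, rfl⟩
    fin_cases j
    · exact h1
    · exact hx
    · exact hy
    · exact hmul _ _ hx hy
    · exact hz
    · exact hmul _ _ hx hz
    · exact hmul _ _ hy hz
    · exact hmul _ _ (hmul _ _ hx hy) hz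
  have : h ∈ Submodule.span K
      (Set.range ![(1 : H), P.x, P.y, P.x*P.y, P.z, P.x*P.z, P.y*P.z, P.x*P.y*P.z]) := by
    rw [P.basis_span]; exact Submodule.mem_top
  exact hle this


end KPAlg

namespace KPV2
variable (K : Type*) [Field K]

def Xe : Module.End K (K × K) := LinearMap.prod (LinearMap.snd K K K) (LinearMap.fst K K K)
def Ze : Module.End K (K × K) := LinearMap.prod (LinearMap.fst K K K) (-LinearMap.snd K K K)

lemma Xe_apply (p : K × K) : Xe K p = (p.2, p.1) := rfl
lemma Ze_apply (p : K × K) : Ze K p = (p.1, -p.2) := rfl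

lemma relX : Xe K * Xe K = 1 := LinearMap.ext fun p => rfl
lemma relY : (-Xe K) * (-Xe K) = 1 := LinearMap.ext fun p => by
  refine Prod.ext ?_ ?_ <;> simp [Xe_apply, Module.End.mul_apply]
lemma relYX : (-Xe K) * Xe K = Xe K * (-Xe K) := LinearMap.ext fun p => by
  refine Prod.ext ?_ ?_ <;> simp [Xe_apply, Module.End.mul_apply]
lemma relZX : Ze K * Xe K = (-Xe K) * Ze K := LinearMap.ext fun p => by
  refine Prod.ext ?_ ?_ <;> simp [Xe_apply, Ze_apply, Module.End.mul_apply]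
lemma relZY : Ze K * (-Xe K) = Xe K * Ze K := LinearMap.ext fun p => by
  refine Prod.ext ?_ ?_ <;> simp [Xe_apply, Ze_apply, Module.End.mul_apply]

variable [CharZero K]

lemma relZZ : Ze K * Ze K = (2:K)⁻¹ • (1 + Xe K + (-Xe K) - Xe K * (-Xe K)) := by
  have h2 : (2:K) ≠ 0 := two_ne_zero
  refine LinearMap.ext fun p => ?_
  simp only [Module.End.mul_apply, LinearMap.smul_apply, LinearMap.add_apply,
    LinearMap.sub_apply, LinearMap.neg_apply, Module.End.one_apply, Xe_apply, Ze_apply]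
  refine Prod.ext ?_ ?_ <;> simp <;> field_simp <;> ring

end KPV2

end KPAux1

noncomputable section

open TensorProduct

variable {K : Type*} {H : Type*} [Field K] [Ring H] [HopfAlgebra K H]


namespace KPAlg
variable (P : KPAlg K H)

/-- V1(b) premodule. -/
def V1 (b : K) : PreMod K H K := ⟨(LinearMap.mul K K).comp (P.rep (b^2) (b^2) b)⟩

lemma V1_act (b : K) (h : H) (v : K) : (P.V1 b).act h v = P.rep (b^2) (b^2) b h * v := rfl

lemma V1_rels [CharZero K] (b : K) (hb4 : b^4 = 1) :
    (b^2)*(b^2) = 1 ∧ b*(b^2) = (b^2)*b ∧ b*b = (2:K)⁻¹ • (1 + b^2 + b^2 - (b^2)*(b^2)) := by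
  refine ⟨by linear_combination hb4, mul_comm _ _, ?_⟩
  rw [smul_eq_mul]
  have h2 : (2:K) ≠ 0 := two_ne_zero
  field_simp
  linear_combination hb4

lemma V1_spec [CharZero K] (b : K) (hb4 : b^4 = 1) :
    (P.V1 b).IsMod ∧ P.IsV1 b (P.V1 b) ∧ (P.V1 b).IsSimple := by
  obtain ⟨h1, h2, h3⟩ := V1_rels (K := K) b hb4
  refine ⟨⟨fun m => ?_, fun g h m => ?_⟩, ⟨fun v => ?_, fun v => ?_, fun v => ?_⟩, ?_⟩
  · rw [V1_act, rep_one, one_mul]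
  · rw [V1_act, V1_act, V1_act, P.rep_mul h1 h1 (mul_comm _ _) h2 h2 h3, mul_assoc]
  · rw [V1_act, rep_x]
  · rw [V1_act, rep_y]
  · rw [V1_act, rep_z]
  · refine ⟨⟨1, one_ne_zero⟩, fun S _ => ?_⟩
    by_cases hS0 : S = ⊥
    · exact Or.inl hS0
    · refine Or.inr (Submodule.eq_top_iff'.2 fun t => ?_)
      obtain ⟨a, haS, ha0⟩ := Submodule.ne_bot_iff S |>.1 hS0
      have : t = (t * a⁻¹) • a := by
        rw [smul_eq_mul, mul_assoc, inv_mul_cancel₀ ha0, mul_one]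
      rw [this]
      exact S.smul_mem _ haS


def V2 [CharZero K] : PreMod K H (K × K) := ⟨P.rep (KPV2.Xe K) (-KPV2.Xe K) (KPV2.Ze K)⟩


open KPV2 in
lemma V2_spec [CharZero K] : P.V2.IsMod ∧ P.IsV2 P.V2 ∧ P.V2.IsSimple := by
  have hact : ∀ (h : H), P.V2.act h = P.rep (Xe K) (-Xe K) (Ze K) h := fun _ => rfl
  have hrm := P.rep_mul (relX K) (relY K) (relYX K) (relZX K) (relZY K) (relZZ K)
  have hx : P.V2.act P.x = Xe K := by rw [hact, rep_x]
  have hy : P.V2.act P.y = -Xe K := by rw [hact, rep_y]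
  have hz : P.V2.act P.z = Ze K := by rw [hact, rep_z]
  refine ⟨⟨fun m => ?_, fun g h m => ?_⟩, ?_, ?_, ?_⟩
  · rw [hact, rep_one]; rfl
  · rw [hact, hact, hact, hrm]; rfl
  · -- IsV2
    refine ⟨?_, ?_, ?_, ?_, ?_, ?_⟩ <;>
      simp [hx, hy, hz, Xe_apply, Ze_apply, Prod.ext_iff]
  · exact ⟨((1:K),(0:K)), by simp [Prod.ext_iff]⟩
  · intro S hS
    by_cases hS0 : S = ⊥
    · exact Or.inl hS0
    refine Or.inr ?_
    obtain ⟨p, hpS, hp0⟩ := Submodule.ne_bot_iff S |>.1 hS0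
    have hzp : (p.1, -p.2) ∈ S := by
      have := hS P.z p hpS
      rwa [hz, Ze_apply] at this
    have hxmem : ∀ q ∈ S, ((q.2 : K), (q.1 : K)) ∈ S := by
      intro q hq
      have := hS P.x q hq
      rwa [hx, Xe_apply] at this
    have key1 : ∀ a : K, a ≠ 0 → ((a, (0:K)) ∈ S) → (((1:K),(0:K)) ∈ S) := by
      intro a ha haS
      have := S.smul_mem a⁻¹ haS
      rwa [Prod.smul_mk, smul_eq_mul, smul_eq_mul, inv_mul_cancel₀ ha, mul_zero] at this
    have key2 : ∀ a : K, a ≠ 0 → (((0:K), a) ∈ S) → (((0:K),(1:K)) ∈ S) := by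
      intro a ha haS
      have := S.smul_mem a⁻¹ haS
      rwa [Prod.smul_mk, smul_eq_mul, smul_eq_mul, inv_mul_cancel₀ ha, mul_zero] at this
    have hone : ((1:K),(0:K)) ∈ S := by
      by_cases hp1 : p.1 = 0
      · have hp2 : p.2 ≠ 0 := by
          intro hp2; exact hp0 (Prod.ext hp1 hp2)
        have e : p - (p.1, -p.2) = ((0:K), p.2 + p.2) := by
          refine Prod.ext ?_ ?_ <;> simp [hp1, sub_neg_eq_add]
        have hmem : ((0:K), p.2 + p.2) ∈ S := e ▸ S.sub_mem hpS hzp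
        have h01 : ((0:K),(1:K)) ∈ S := key2 _ (by simpa [add_self_eq_zero] using hp2) hmem
        simpa using hxmem _ h01
      · have e : p + (p.1, -p.2) = ((p.1 + p.1 : K), (0:K)) := by
          refine Prod.ext ?_ ?_ <;> simp
        have hmem : ((p.1 + p.1 : K), (0:K)) ∈ S := e ▸ S.add_mem hpS hzp
        exact key1 _ (by simpa [add_self_eq_zero] using hp1) hmem
    have h01 : ((0:K),(1:K)) ∈ S := by simpa using hxmem _ hone
    refine Submodule.eq_top_iff'.2 fun t => ?_
    have : t = t.1 • ((1:K),(0:K)) + t.2 • ((0:K),(1:K)) := by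
      refine Prod.ext ?_ ?_ <;> simp
    rw [this]
    exact S.add_mem (S.smul_mem _ hone) (S.smul_mem _ h01)


lemma act_closure {M : Type*} [AddCommGroup M] [Module K M] (Q : PreMod K H M)
    (hQ : Q.IsMod) (S : Submodule K M)
    (hx : ∀ m ∈ S, Q.act P.x m ∈ S) (hy : ∀ m ∈ S, Q.act P.y m ∈ S)
    (hz : ∀ m ∈ S, Q.act P.z m ∈ S) :
    ∀ h : H, ∀ m ∈ S, Q.act h m ∈ S := by
  obtain ⟨h1, hm⟩ := hQ
  let T : Submodule K H :=
  { carrier := {h | ∀ m ∈ S, Q.act h m ∈ S}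
    add_mem' := fun {a b} ha hb m hmS => by
      rw [map_add, LinearMap.add_apply]
      exact S.add_mem (ha m hmS) (hb m hmS)
    zero_mem' := fun m hmS => by
      rw [map_zero, LinearMap.zero_apply]
      exact S.zero_mem
    smul_mem' := fun c a ha m hmS => by
      rw [map_smul, LinearMap.smul_apply]
      exact S.smul_mem c (ha m hmS) }
  have hmul' : ∀ a b : H, a ∈ T → b ∈ T → a*b ∈ T := fun a b ha hb m hmS => by
    rw [hm]; exact ha _ (hb m hmS)
  have honeT : (1:H) ∈ T := fun m hmS => by rw [h1]; exact hmS
  exact P.span_all honeT hx hy hz hmul'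

lemma equiv_ext {M N : Type*} [AddCommGroup M] [Module K M] [AddCommGroup N] [Module K N]
    (Q : PreMod K H M) (Q' : PreMod K H N) (hQ : Q.IsMod) (hQ' : Q'.IsMod)
    (f : M →ₗ[K] N)
    (hx : ∀ m, f (Q.act P.x m) = Q'.act P.x (f m))
    (hy : ∀ m, f (Q.act P.y m) = Q'.act P.y (f m))
    (hz : ∀ m, f (Q.act P.z m) = Q'.act P.z (f m)) :
    ∀ (h : H) (m : M), f (Q.act h m) = Q'.act h (f m) := by
  obtain ⟨h1, hm⟩ := hQ
  obtain ⟨h1', hm'⟩ := hQ'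
  let T : Submodule K H :=
  { carrier := {h | ∀ m, f (Q.act h m) = Q'.act h (f m)}
    add_mem' := fun {a b} ha hb m => by
      rw [map_add, map_add, LinearMap.add_apply, LinearMap.add_apply, map_add, ha m, hb m]
    zero_mem' := fun m => by
      rw [map_zero, map_zero, LinearMap.zero_apply, LinearMap.zero_apply, map_zero]
    smul_mem' := fun c a ha m => by
      rw [map_smul, map_smul, LinearMap.smul_apply, LinearMap.smul_apply, map_smul, ha m]
  }
  have hmul' : ∀ a b : H, a ∈ T → b ∈ T → a*b ∈ T := fun a b ha hb m => by
    rw [hm, hm', ha _, hb _]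
  have honeT : (1:H) ∈ T := fun m => by rw [h1, h1']
  exact P.span_all honeT hx hy hz hmul'


end KPAlg

/-- The Kac–Paljutkin algebra `H₈` has, up to isomorphism, exactly
five simple left modules: the four one-dimensional modules `V₁(b)`, `b ∈ {1,-1,i,-i}`,
and the two-dimensional module `V₂`.  They are simple, pairwise non-isomorphic, and
every simple left `H₈`-module is isomorphic to one of them. -/
theorem classification_simple_modules_over_H8
    [CharZero K] [IsAlgClosed K] (P : KPAlg K H) (i : K) (hi : i ^ 2 = -1) :
    (∀ b ∈ ({1, -1, i, -i} : Set K),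
      ∃ Q : PreMod K H K, Q.IsMod ∧ P.IsV1 b Q ∧ Q.IsSimple) ∧
    (∃ Q : PreMod K H (K × K), Q.IsMod ∧ P.IsV2 Q ∧ Q.IsSimple) ∧
    (∀ b ∈ ({1, -1, i, -i} : Set K), ∀ b' ∈ ({1, -1, i, -i} : Set K), b ≠ b' →
      ∀ (Q Q' : PreMod K H K), Q.IsMod → P.IsV1 b Q → Q'.IsMod → P.IsV1 b' Q' →
        ¬ PreMod.Equiv Q Q') ∧
    (∀ b ∈ ({1, -1, i, -i} : Set K),
      ∀ (Q : PreMod K H K) (Q' : PreMod K H (K × K)),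
        Q.IsMod → P.IsV1 b Q → Q'.IsMod → P.IsV2 Q' → ¬ PreMod.Equiv Q Q') ∧
    (∀ (M : Type*) [AddCommGroup M] [Module K M] (Q : PreMod K H M),
      Q.IsMod → Q.IsSimple →
      ((∃ b ∈ ({1, -1, i, -i} : Set K), ∃ Q' : PreMod K H K,
          Q'.IsMod ∧ P.IsV1 b Q' ∧ PreMod.Equiv Q Q') ∨
       (∃ Q' : PreMod K H (K × K), Q'.IsMod ∧ P.IsV2 Q' ∧ PreMod.Equiv Q Q'))) := by
  have hb4 : ∀ b ∈ ({1, -1, i, -i} : Set K), b^4 = 1 := by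
    rintro b hb
    simp only [Set.mem_insert_iff, Set.mem_singleton_iff] at hb
    rcases hb with rfl | rfl | hb | hb
    · norm_num
    · norm_num
    · rw [hb]; linear_combination (i^2 - 1) * hi
    · rw [hb]; linear_combination (i^2 - 1) * hi
  refine ⟨?_, ?_, ?_, ?_, ?_⟩
  · -- existence of V1(b)
    intro b hb
    obtain ⟨h1, h2, h3⟩ := P.V1_spec b (hb4 b hb)
    exact ⟨P.V1 b, h1, h2, h3⟩
  · -- existence of V2
    obtain ⟨h1, h2, h3⟩ := P.V2_spec
    exact ⟨P.V2, h1, h2, h3⟩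
  · -- V1(b) ≄ V1(b')
    rintro b _ b' _ hne Q Q' hQ hV1 hQ' hV1' ⟨f, hf⟩
    have h := hf P.z 1
    rw [hV1.2.2 1, hV1'.2.2 (f 1)] at h
    have e : f (b * 1) = b * f 1 := by
      rw [← smul_eq_mul, map_smul, smul_eq_mul]
    rw [e] at h
    have hf1 : f (1:K) ≠ 0 := by
      intro h0
      have : (1:K) = 0 := by
        have := f.injective (h0.trans (map_zero f).symm)
        exact this
      exact one_ne_zero this
    exact hne (mul_right_cancel₀ hf1 h)
  · -- V1 ≄ V2 (dimension)
    rintro b _ Q Q' hQ hV1 hQ' hV2 ⟨f, hf⟩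
    set s := f.symm ((1:K),(0:K)) with hs_def
    set t := f.symm ((0:K),(1:K)) with ht_def
    have h1 : f s = ((1:K),(0:K)) := f.apply_symm_apply _
    have h2 : f t = ((0:K),(1:K)) := f.apply_symm_apply _
    by_cases hs : s = 0
    · rw [hs, map_zero] at h1
      simpa [Prod.ext_iff] using h1.symm
    · have ht : t = (t * s⁻¹) • s := by
        rw [smul_eq_mul, mul_assoc, inv_mul_cancel₀ hs, mul_one]
      have : ((0:K),(1:K)) = (t * s⁻¹) • ((1:K),(0:K)) := by
        rw [← h1, ← h2, ← map_smul, ← ht]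
      have h3 : (1:K) = 0 := by
        have := congrArg Prod.snd this
        simpa using this
      exact one_ne_zero h3
  · -- completeness
    intro M _ _ Q hMod hSimp
    obtain ⟨hone, hmul⟩ := hMod
    -- operator lemmas
    have hxx' : ∀ m : M, Q.act P.x (Q.act P.x m) = m := fun m => by
      rw [← hmul, P.hxx, hone]
    have hyy' : ∀ m : M, Q.act P.y (Q.act P.y m) = m := fun m => by
      rw [← hmul, P.hyy, hone]
    have hXYop : ∀ m : M, Q.act P.x (Q.act P.y m) = Q.act (P.x*P.y) m :=
      fun m => (hmul _ _ _).symm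
    have exx := nf_cancel P.hxx
    have eyy := nf_cancel P.hyy
    have eyx := nf_move (P.xy_comm.symm)
    have ezx := nf_move P.zx
    have ezy := nf_move P.zy
    have idEE : (P.x*P.y)*(P.x*P.y) = (1:H) := by
      simp [mul_assoc, exx, eyy, eyx, P.hxx, P.hyy, P.xy_comm.symm]
    have idEX : (P.x*P.y)*P.x = P.x*(P.x*P.y) := by
      simp [mul_assoc, exx, eyy, eyx, P.hxx, P.hyy, P.xy_comm.symm]
    have idEY : (P.x*P.y)*P.y = P.y*(P.x*P.y) := by
      simp [mul_assoc, exx, eyy, eyx, ezx, ezy, P.hxx, P.hyy, P.xy_comm.symm, P.zx, P.zy]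
    have idEZ : (P.x*P.y)*P.z = P.z*(P.x*P.y) := by
      simp [mul_assoc, exx, eyy, eyx, ezx, ezy, P.hxx, P.hyy, P.xy_comm.symm, P.zx, P.zy]
    have hEE : ∀ m : M, Q.act (P.x*P.y) (Q.act (P.x*P.y) m) = m := fun m => by
      rw [← hmul, idEE, hone]
    have hEX : ∀ m : M, Q.act (P.x*P.y) (Q.act P.x m) = Q.act P.x (Q.act (P.x*P.y) m) :=
      fun m => by rw [← hmul, idEX, hmul]
    have hEY : ∀ m : M, Q.act (P.x*P.y) (Q.act P.y m) = Q.act P.y (Q.act (P.x*P.y) m) :=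
      fun m => by rw [← hmul, idEY, hmul]
    have hEZ : ∀ m : M, Q.act (P.x*P.y) (Q.act P.z m) = Q.act P.z (Q.act (P.x*P.y) m) :=
      fun m => by rw [← hmul, idEZ, hmul]
    have hZX_op : ∀ m : M, Q.act P.z (Q.act P.x m) = Q.act P.y (Q.act P.z m) :=
      fun m => by rw [← hmul, P.zx, hmul]
    have hZZ_op : ∀ m : M, Q.act P.z (Q.act P.z m) =
        (2:K)⁻¹ • (m + Q.act P.x m + Q.act P.y m - Q.act (P.x*P.y) m) := fun m => by
      rw [← hmul, P.hzz, map_smul, LinearMap.smul_apply]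
      congr 1
      rw [map_sub, map_add, map_add, LinearMap.sub_apply, LinearMap.add_apply,
        LinearMap.add_apply, hone]
    -- the submodule S+ = ker(E - 1)
    set Sp := LinearMap.ker (Q.act (P.x*P.y) - (LinearMap.id : M →ₗ[K] M)) with hSp_def
    have hmemSp : ∀ m : M, m ∈ Sp ↔ Q.act (P.x*P.y) m = m := fun m => by
      rw [hSp_def, LinearMap.mem_ker, LinearMap.sub_apply, LinearMap.id_apply, sub_eq_zero]
    have hSp_closed : ∀ h : H, ∀ m ∈ Sp, Q.act h m ∈ Sp := by
      refine P.act_closure Q ⟨hone, hmul⟩ Sp ?_ ?_ ?_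
      · intro m hm; rw [hmemSp] at hm ⊢; rw [hEX, hm]
      · intro m hm; rw [hmemSp] at hm ⊢; rw [hEY, hm]
      · intro m hm; rw [hmemSp] at hm ⊢; rw [hEZ, hm]
    obtain ⟨m₀, hm₀⟩ := hSimp.1
    rcases hSimp.2 Sp hSp_closed with hbot | htop
    · -- case E = -1 : two-dimensional module V2
      right
      have hEneg : ∀ m : M, Q.act (P.x*P.y) m = -m := by
        intro m
        have h0 : (Q.act (P.x*P.y) - (LinearMap.id : M →ₗ[K] M)) (Q.act (P.x*P.y) m + m) = 0 := by
          rw [LinearMap.sub_apply, LinearMap.id_apply, map_add, hEE]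
          abel
        have hmem : Q.act (P.x*P.y) m + m ∈ Sp := LinearMap.mem_ker.2 h0
        rw [hbot, Submodule.mem_bot] at hmem
        exact eq_neg_of_add_eq_zero_left hmem
      have hYnegX : ∀ m : M, Q.act P.y m = -Q.act P.x m := by
        intro m
        have h1 : Q.act P.x (Q.act P.y m) = -m := by rw [hXYop, hEneg]
        calc Q.act P.y m = Q.act P.x (Q.act P.x (Q.act P.y m)) := (hxx' _).symm
          _ = Q.act P.x (-m) := by rw [h1]
          _ = -Q.act P.x m := map_neg _ _
      have hZ2 : ∀ m : M, Q.act P.z (Q.act P.z m) = m := by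
        intro m
        rw [hZZ_op, hYnegX, hEneg]
        have e1 : m + Q.act P.x m + -Q.act P.x m - -m = (2:K) • m := by
          rw [two_smul]; abel
        rw [e1, smul_smul, inv_mul_cancel₀ (two_ne_zero), one_smul]
      have hZanti : ∀ m : M, Q.act P.z (Q.act P.x m) = -Q.act P.x (Q.act P.z m) := by
        intro m
        rw [hZX_op, hYnegX]
      -- eigenvector of Z with eigenvalue ±1
      have key : ∃ v : M, v ≠ 0 ∧ (Q.act P.z v = v ∨ Q.act P.z v = -v) := by
        by_cases h1 : Q.act P.z m₀ - m₀ = 0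
        · exact ⟨m₀, hm₀, Or.inl (by rwa [sub_eq_zero] at h1)⟩
        · refine ⟨Q.act P.z m₀ - m₀, h1, Or.inr ?_⟩
          rw [map_sub, hZ2]
          abel
      obtain ⟨v, hv0, hc⟩ := key
      -- setup v1 v2 and conclude
      have finish : ∀ v1 v2 : M, v1 ≠ 0 →
          Q.act P.x v1 = v2 → Q.act P.x v2 = v1 →
          Q.act P.z v1 = v1 → Q.act P.z v2 = -v2 →
          (∃ Q' : PreMod K H (K × K), Q'.IsMod ∧ P.IsV2 Q' ∧ PreMod.Equiv Q Q') := by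
        intro v1 v2 hv10 hXv1 hXv2 hZv1 hZv2
        have hv20 : v2 ≠ 0 := by
          intro h0
          exact hv10 (by rw [← hXv2, h0, map_zero])
        have hYv1 : Q.act P.y v1 = -v2 := by rw [hYnegX, hXv1]
        have hYv2 : Q.act P.y v2 = -v1 := by rw [hYnegX, hXv2]
        -- span {v1, v2} = ⊤
        set S := Submodule.span K ({v1, v2} : Set M) with hS_def
        have hv1S : v1 ∈ S := Submodule.subset_span (by simp)
        have hv2S : v2 ∈ S := Submodule.subset_span (by simp)
        have hSclosed : ∀ h : H, ∀ m ∈ S, Q.act h m ∈ S := by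
          refine P.act_closure Q ⟨hone, hmul⟩ S ?_ ?_ ?_ <;>
          · intro m hm
            obtain ⟨a, c, hac⟩ := Submodule.mem_span_pair.1 hm
            rw [← hac, map_add, map_smul, map_smul]
            first
              | (rw [hXv1, hXv2]
                 exact S.add_mem (S.smul_mem _ hv2S) (S.smul_mem _ hv1S))
              | (rw [hYv1, hYv2, smul_neg, smul_neg]
                 exact S.add_mem (S.neg_mem (S.smul_mem _ hv2S)) (S.neg_mem (S.smul_mem _ hv1S)))
              | (rw [hZv1, hZv2, smul_neg]
                 exact S.add_mem (S.smul_mem _ hv1S) (S.neg_mem (S.smul_mem _ hv2S)))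
        have hStop : S = ⊤ := by
          rcases hSimp.2 S hSclosed with h | h
          · exact absurd (h ▸ hv1S) (by simp [Submodule.mem_bot, hv10])
          · exact h
        -- linear independence
        have hindep : ∀ a c : K, a • v1 + c • v2 = 0 → a = 0 ∧ c = 0 := by
          intro a c h
          have h2 : a • v1 - c • v2 = 0 := by
            have h2' := congrArg (Q.act P.z) h
            rw [map_add, map_smul, map_smul, hZv1, hZv2, map_zero, smul_neg] at h2'
            rw [sub_eq_add_neg]
            exact h2'
          have h3 : (a + a) • v1 = 0 := by
            rw [add_smul]
            have := congrArg₂ (· + ·) h h2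
            simpa using by
              have h4 : (a • v1 + c • v2) + (a • v1 - c • v2) = 0 := by rw [h, h2, add_zero]
              calc a • v1 + a • v1 = (a • v1 + c • v2) + (a • v1 - c • v2) := by abel
                _ = 0 := h4
          have ha : a = 0 := by
            rcases smul_eq_zero.1 h3 with h' | h'
            · exact add_self_eq_zero.1 h'
            · exact absurd h' hv10
          refine ⟨ha, ?_⟩
          rw [ha, zero_smul, zero_add] at h
          rcases smul_eq_zero.1 h with h' | h'
          · exact h'
          · exact absurd h' hv20
        -- the equivalence
        set eL : (K × K) →ₗ[K] M :=
          (LinearMap.toSpanSingleton K M v1).coprod (LinearMap.toSpanSingleton K M v2) with heL_def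
        have heL_apply : ∀ p : K × K, eL p = p.1 • v1 + p.2 • v2 := fun p => rfl
        have hinj : Function.Injective eL := by
          rw [← LinearMap.ker_eq_bot]
          refine (Submodule.eq_bot_iff _).2 fun p hp => ?_
          have := hindep p.1 p.2 (by rw [← heL_apply]; exact hp)
          exact Prod.ext this.1 this.2
        have hsurj : Function.Surjective eL := by
          intro m
          have hm : m ∈ S := hStop ▸ Submodule.mem_top
          obtain ⟨a, c, hac⟩ := Submodule.mem_span_pair.1 hm
          exact ⟨(a, c), hac⟩
        set e := LinearEquiv.ofBijective eL ⟨hinj, hsurj⟩ with he_def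
        have he_apply : ∀ p : K × K, e p = p.1 • v1 + p.2 • v2 := fun p => rfl
        obtain ⟨hmod', hisv2', hsimple'⟩ := P.V2_spec
        have hp_decomp : ∀ p : K × K, p = p.1 • ((1:K),(0:K)) + p.2 • ((0:K),(1:K)) := by
          intro p
          refine Prod.ext ?_ ?_ <;> simp
        have hgen : ∀ (w : H) (s t : K × K),
            Q.act w v1 = s.1 • v1 + s.2 • v2 →
            Q.act w v2 = t.1 • v1 + t.2 • v2 →
            P.V2.act w ((1:K),(0:K)) = s →
            P.V2.act w ((0:K),(1:K)) = t →
            ∀ m : M, e.symm (Q.act w m) = P.V2.act w (e.symm m) := by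
          intro w s t hwv1 hwv2 hw10 hw01 m
          set p := e.symm m with hp_def
          have hm : m = e p := by rw [hp_def, e.apply_symm_apply]
          have hL : Q.act w m = e (p.1 • s + p.2 • t) := by
            rw [hm, he_apply, map_add, map_smul, map_smul, hwv1, hwv2, he_apply]
            simp only [Prod.fst_add, Prod.snd_add, Prod.smul_fst, Prod.smul_snd,
              smul_eq_mul, smul_add, smul_smul, add_smul]
            abel
          have hR : P.V2.act w p = p.1 • s + p.2 • t := by
            conv_lhs => rw [hp_decomp p]
            rw [map_add, map_smul, map_smul, hw10, hw01]
          rw [hL, e.symm_apply_apply, hR]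
        have hx' := hgen P.x ((0:K),(1:K)) ((1:K),(0:K))
          (by rw [hXv1]; simp) (by rw [hXv2]; simp) hisv2'.1 hisv2'.2.1
        have hy' := hgen P.y ((0:K),(-1:K)) ((-1:K),(0:K))
          (by rw [hYv1]; simp) (by rw [hYv2]; simp)
          (by rw [hisv2'.2.2.1]; refine Prod.ext ?_ ?_ <;> simp)
          (by rw [hisv2'.2.2.2.1]; refine Prod.ext ?_ ?_ <;> simp)
        have hz' := hgen P.z ((1:K),(0:K)) ((0:K),(-1:K))
          (by rw [hZv1]; simp) (by rw [hZv2]; simp)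
          (by rw [hisv2'.2.2.2.2.1])
          (by rw [hisv2'.2.2.2.2.2]; refine Prod.ext ?_ ?_ <;> simp)
        refine ⟨P.V2, hmod', hisv2', e.symm, ?_⟩
        exact P.equiv_ext Q P.V2 ⟨hone, hmul⟩ hmod' (e.symm : M →ₗ[K] (K × K)) hx' hy' hz'
      rcases hc with hc | hc
      · -- Z v = v : take v1 = v, v2 = X v
        refine finish v (Q.act P.x v) hv0 rfl (hxx' v) hc ?_
        rw [hZanti, hc]
      · -- Z v = -v : take v1 = X v, v2 = v
        have hXv0 : Q.act P.x v ≠ 0 := by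
          intro h0
          exact hv0 (by rw [← hxx' v, h0, map_zero])
        refine finish (Q.act P.x v) v hXv0 (hxx' v) rfl ?_ hc
        rw [hZanti, hc, map_neg, neg_neg]
    · -- case E = 1 : one-dimensional module V1(b)
      left
      have hEid : ∀ m : M, Q.act (P.x*P.y) m = m := by
        intro m
        have : m ∈ Sp := htop ▸ Submodule.mem_top
        exact (hmemSp m).1 this
      have hYeqX : ∀ m : M, Q.act P.y m = Q.act P.x m := by
        intro m
        have h1 : Q.act P.x (Q.act P.y m) = m := by rw [hXYop, hEid]
        calc Q.act P.y m = Q.act P.x (Q.act P.x (Q.act P.y m)) := (hxx' _).symm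
          _ = Q.act P.x m := by rw [h1]
      have hZ2 : ∀ m : M, Q.act P.z (Q.act P.z m) = Q.act P.x m := by
        intro m
        rw [hZZ_op, hYeqX, hEid]
        have e1 : m + Q.act P.x m + Q.act P.x m - m = (2:K) • Q.act P.x m := by
          rw [two_smul]; abel
        rw [e1, smul_smul, inv_mul_cancel₀ (two_ne_zero), one_smul]
      -- find an eigenvector of Z
      have key : ∃ b ∈ ({1,-1,i,-i} : Set K), ∃ v : M, v ≠ 0 ∧ Q.act P.z v = b • v := by
        by_cases h1 : Q.act P.z m₀ - m₀ = 0
        · exact ⟨1, by simp, m₀, hm₀, by rw [sub_eq_zero] at h1; rw [h1, one_smul]⟩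
        · set u1 := Q.act P.z m₀ - m₀ with hu1_def
          by_cases h2 : Q.act P.z u1 + u1 = 0
          · refine ⟨-1, by simp, u1, h1, ?_⟩
            rw [eq_neg_of_add_eq_zero_left h2, neg_one_smul]
          · set u2 := Q.act P.z u1 + u1 with hu2_def
            have hu2 : u2 = Q.act P.x m₀ - m₀ := by
              rw [hu2_def, hu1_def, map_sub, hZ2]
              abel
            by_cases h3 : Q.act P.z u2 - i • u2 = 0
            · exact ⟨i, by simp, u2, h2, by rw [sub_eq_zero] at h3; exact h3⟩
            · refine ⟨-i, by simp, Q.act P.z u2 - i • u2, h3, ?_⟩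
              have hii : i * i = -1 := by linear_combination hi
              have hXu2 : Q.act P.x u2 = -u2 := by
                rw [hu2, map_sub, hxx']
                abel
              rw [map_sub, map_smul, hZ2, hXu2, smul_sub, smul_smul]
              have hmi : -i * i = 1 := by rw [neg_mul, hii, neg_neg]
              rw [hmi, one_smul, neg_smul]
              abel
      obtain ⟨b, hbmem, v, hv0, hZv⟩ := key
      have hXv : Q.act P.x v = (b*b) • v := by
        rw [← hZ2, hZv, map_smul, hZv, smul_smul]
      have hYv : Q.act P.y v = (b*b) • v := by rw [hYeqX, hXv]
      -- span of v is everything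
      set S := Submodule.span K ({v} : Set M) with hS_def
      have hvS : v ∈ S := Submodule.mem_span_singleton_self v
      have hSclosed : ∀ h : H, ∀ m ∈ S, Q.act h m ∈ S := by
        refine P.act_closure Q ⟨hone, hmul⟩ S ?_ ?_ ?_ <;>
        · intro m hm
          obtain ⟨c, hc⟩ := Submodule.mem_span_singleton.1 hm
          rw [← hc, map_smul]
          first
            | (rw [hXv]; exact S.smul_mem _ (S.smul_mem _ hvS))
            | (rw [hYv]; exact S.smul_mem _ (S.smul_mem _ hvS))
            | (rw [hZv]; exact S.smul_mem _ (S.smul_mem _ hvS))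
      have hStop : S = ⊤ := by
        rcases hSimp.2 S hSclosed with h | h
        · exact absurd (h ▸ hvS) (by simp [Submodule.mem_bot, hv0])
        · exact h
      -- construct the equivalence
      have hinj : Function.Injective (LinearMap.toSpanSingleton K M v) := by
        rw [← LinearMap.ker_eq_bot]
        exact LinearMap.ker_toSpanSingleton (R := K) (h := hv0)
      have hsurj : Function.Surjective (LinearMap.toSpanSingleton K M v) := by
        rw [← LinearMap.range_eq_top, ← LinearMap.span_singleton_eq_range, ← hS_def, hStop]
      set e := LinearEquiv.ofBijective (LinearMap.toSpanSingleton K M v) ⟨hinj, hsurj⟩ with he_def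
      have he_apply : ∀ c : K, e c = c • v := fun c => rfl
      have hev1 : e 1 = v := by rw [he_apply, one_smul]
      have hesv : e.symm v = 1 := by rw [← hev1, e.symm_apply_apply]
      obtain ⟨hmod', hisv1', hsimple'⟩ := P.V1_spec b (hb4 b hbmem)
      have hgen : ∀ (w : H) (lam : K), Q.act w v = lam • v →
          (∀ c : K, (P.V1 b).act w c = lam * c) →
          ∀ m : M, e.symm (Q.act w m) = (P.V1 b).act w (e.symm m) := by
        intro w lam hwv hact m
        set c := e.symm m with hc_def
        have hm : m = c • v := by rw [← he_apply, hc_def, e.apply_symm_apply]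
        rw [hm, map_smul, hwv, smul_smul, hact]
        have : (c * lam) • v = e (c * lam) := rfl
        rw [this, e.symm_apply_apply, mul_comm]
      have hx' : ∀ m : M, e.symm (Q.act P.x m) = (P.V1 b).act P.x (e.symm m) := by
        refine hgen P.x (b*b) hXv fun c => ?_
        rw [hisv1'.1 c, pow_two]
      have hy' : ∀ m : M, e.symm (Q.act P.y m) = (P.V1 b).act P.y (e.symm m) := by
        refine hgen P.y (b*b) hYv fun c => ?_
        rw [hisv1'.2.1 c, pow_two]
      have hz' : ∀ m : M, e.symm (Q.act P.z m) = (P.V1 b).act P.z (e.symm m) :=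
        hgen P.z b hZv fun c => hisv1'.2.2 c
      refine ⟨b, hbmem, P.V1 b, hmod', hisv1', e.symm, ?_⟩
      exact P.equiv_ext Q (P.V1 b) ⟨hone, hmul⟩ hmod' (e.symm : M →ₗ[K] K) hx' hy' hz'


end
end

section
/- Let a ∈ K with a + 1 = ±√2, set θ = (1/2)(i - 1)(a + 1), and let V be the two-dimensional braided vector space over K with basis w1, w2 and braiding c determined by c(w1⊗w1) = -θ w2⊗w2, c(w1⊗w2) = θ w1⊗w2, c(w2⊗w1) = -θ w2⊗w1, c(w2⊗w2) = θ w1⊗w1 (this is the braiding of the Yetter–Drinfeld module W_1^a over H_8, and it satisfies the braid equation). Then for every n ≥ 1: S_{2n-1,1}((w1⊗w2)^{⊗n}) = ((1+θ)(1-(-θ^2)^n)/(1+θ^2)) · (w1⊗w2)^{⊗n}, and S_{2n,1}((w1⊗w2)^{⊗n} ⊗ w1) = ((1-θ+(-1)^n θ^{2n+1}(1+θ))/(1+θ^2)) · ((w1⊗w2)^{⊗n} ⊗ w1). -/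
open TensorProduct CategoryTheory MonoidalCategory

noncomputable section

universe u

variable (K : Type u) [Field K] (V : Type u) [AddCommGroup V] [Module K V]

/-- The `n`-th tensor power of `V` (normalized with a tensor-unit factor on the left),
as an object of `ModuleCat K`. -/
def TP : ℕ → ModuleCat.{u} K
  | 0 => ModuleCat.of K K
  | n+1 => TP n ⊗ ModuleCat.of K V

variable {K V}

/-- The braiding `c` applied in tensor positions `(k, k+1)` of the `n`-th tensor power
(acting on the `k`-th and `(k+1)`-st copies of `V`); the identity when `k = 0` or `k ≥ n`. -/
def ck (c : V ⊗[K] V →ₗ[K] V ⊗[K] V) : (n k : ℕ) → (TP K V n ⟶ TP K V n)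
  | 0, _ => 𝟙 _
  | 1, _ => 𝟙 _
  | n+2, k =>
    if k = n+1 then
      (α_ (TP K V n) (ModuleCat.of K V) (ModuleCat.of K V)).hom ≫
        ((TP K V n) ◁ (ModuleCat.ofHom c)) ≫
        (α_ (TP K V n) (ModuleCat.of K V) (ModuleCat.of K V)).inv
    else (ck c (n+1) k) ▷ (ModuleCat.of K V)

/-- The partial quantum symmetrizer `S_{j,1} = id + c_j + c_j c_{j-1} + ⋯ + c_j ⋯ c_1`
on the `n`-th tensor power (for `j = 0` it is the identity). -/
def Sfrag (c : V ⊗[K] V →ₗ[K] V ⊗[K] V) (n : ℕ) : ℕ → (TP K V n ⟶ TP K V n)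
  | 0 => 𝟙 _
  | j+1 => 𝟙 _ + (Sfrag c n j ≫ ck c n (j+1))

/-- The quantum symmetrizer `S_n` on the `n`-th tensor power:
`S_1 = id`, `S_n = (S_{n-1} ⊗ id) ∘ S_{n-1,1}`. -/
def Sn (c : V ⊗[K] V →ₗ[K] V ⊗[K] V) : (n : ℕ) → (TP K V n ⟶ TP K V n)
  | 0 => 𝟙 _
  | 1 => 𝟙 _
  | n+2 => Sfrag c (n+2) (n+1) ≫ ((Sn c (n+1)) ▷ (ModuleCat.of K V))

/-- The rank of the `n`-th graded component `V^{⊗n}/ker S_n` of the Nichols algebra. -/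
def nicholsDegRank (c : V ⊗[K] V →ₗ[K] V ⊗[K] V) (n : ℕ) : Cardinal :=
  Module.rank K (↥(TP K V n) ⧸ LinearMap.ker (Sn c n).hom)

/-- The canonical embedding of the `n`-th tensor power into the tensor algebra. -/
def toTA : (n : ℕ) → (↥(TP K V n) →ₗ[K] TensorAlgebra K V)
  | 0 => Algebra.linearMap K (TensorAlgebra K V)
  | n+1 => TensorProduct.lift
      (((LinearMap.mul K (TensorAlgebra K V)).comp (toTA n)).compl₂
        (TensorAlgebra.ι K (M := V)))

/-- The Nichols algebra of the braided vector space `(V, c)`: the quotient of the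
tensor algebra `T(V)` by the (ideal generated by the) kernels of the quantum
symmetrizers. -/
def NicholsAlgebra (c : V ⊗[K] V →ₗ[K] V ⊗[K] V) : Type u :=
  RingQuot (fun a b : TensorAlgebra K V =>
    (∃ n, 2 ≤ n ∧ ∃ t ∈ LinearMap.ker (Sn c n).hom, toTA n t = a) ∧ b = 0)

instance (c : V ⊗[K] V →ₗ[K] V ⊗[K] V) : Ring (NicholsAlgebra c) := by
  unfold NicholsAlgebra; infer_instance

instance (c : V ⊗[K] V →ₗ[K] V ⊗[K] V) : Algebra K (NicholsAlgebra c) := by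
  unfold NicholsAlgebra; infer_instance
/-- The element `(w₁ ⊗ w₂)^{⊗n}` of the `2n`-th tensor power. -/
def welt (w1 w2 : V) : (n : ℕ) → ↥(TP K V (2*n))
  | 0 => (1 : K)
  | n+1 => (welt w1 w2 n ⊗ₜ[K] w1) ⊗ₜ[K] w2

end

noncomputable section Aux
open TensorProduct CategoryTheory MonoidalCategory

universe v
variable {K : Type v} [Field K] {V : Type v} [AddCommGroup V] [Module K V]

def mu (θ : K) (k : ℕ) : K := if k % 2 = 1 then θ else -θ

lemma ck_last (c : V ⊗[K] V →ₗ[K] V ⊗[K] V) (n : ℕ) :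
    ck c (n+2) (n+1) =
      (α_ (TP K V n) (ModuleCat.of K V) (ModuleCat.of K V)).hom ≫
        ((TP K V n) ◁ (ModuleCat.ofHom c)) ≫
        (α_ (TP K V n) (ModuleCat.of K V) (ModuleCat.of K V)).inv := by
  simp [ck]
  rfl

lemma ck_lift (c : V ⊗[K] V →ₗ[K] V ⊗[K] V) (n k : ℕ) (h : k ≠ n+1) :
    ck c (n+2) k = (ck c (n+1) k) ▷ (ModuleCat.of K V) := by
  simp [ck, h]
  rfl

lemma ck_last_tmul (c : V ⊗[K] V →ₗ[K] V ⊗[K] V) (n : ℕ) (x : ↥(TP K V n))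
    (v w : V) (s : K) (hvw : c (v ⊗ₜ[K] w) = s • (v ⊗ₜ[K] w)) :
    (ck c (n+2) (n+1)) ((x ⊗ₜ[K] v) ⊗ₜ[K] w) = s • ((x ⊗ₜ[K] v) ⊗ₜ[K] w) := by
  rw [ck_last]
  erw [CategoryTheory.comp_apply, CategoryTheory.comp_apply,
    ModuleCat.MonoidalCategory.associator_hom_apply,
    ModuleCat.MonoidalCategory.whiskerLeft_apply,
    ModuleCat.ofHom_apply, hvw, tmul_smul, map_smul,
    ModuleCat.MonoidalCategory.associator_inv_apply]

lemma ck_lift_tmul (c : V ⊗[K] V →ₗ[K] V ⊗[K] V) (n k : ℕ) (h : k ≠ n+1)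
    (x : ↥(TP K V (n+1))) (w : V) (s : K) (hx : (ck c (n+1) k) x = s • x) :
    (ck c (n+2) k) (x ⊗ₜ[K] w) = s • (x ⊗ₜ[K] w) := by
  rw [ck_lift c n k h]
  erw [ModuleCat.MonoidalCategory.whiskerRight_apply]
  rw [hx]; simp only [smul_tmul']
  rfl

lemma eig (θ : K) (w1 w2 : V) (c : V ⊗[K] V →ₗ[K] V ⊗[K] V)
    (hc12 : c (w1 ⊗ₜ[K] w2) = θ • (w1 ⊗ₜ[K] w2))
    (hc21 : c (w2 ⊗ₜ[K] w1) = (-θ) • (w2 ⊗ₜ[K] w1)) :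
    ∀ n : ℕ,
      (∀ k, 1 ≤ k → k ≤ 2*n - 1 →
        (ck c (2*n) k) (welt w1 w2 n) = mu θ k • welt w1 w2 n) ∧
      (∀ k, 1 ≤ k → k ≤ 2*n →
        (ck c (2*n+1) k) ((welt w1 w2 n) ⊗ₜ[K] w1)
          = mu θ k • ((welt w1 w2 n) ⊗ₜ[K] w1)) := by
  intro n
  induction n with
  | zero =>
    constructor <;> intro k hk1 hk2 <;> omega
  | succ m ih =>
    have hA : ∀ k, 1 ≤ k → k ≤ 2*(m+1) - 1 →
        (ck c (2*(m+1)) k) (welt w1 w2 (m+1)) = mu θ k • welt w1 w2 (m+1) := by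
      intro k hk1 hk2
      by_cases hk : k = 2*m+1
      · subst hk
        have hpar : mu θ (2*m+1) = θ := by
          have : (2*m+1) % 2 = 1 := by omega
          simp [mu, this]
        rw [hpar]
        exact ck_last_tmul c (2*m) (welt w1 w2 m) w1 w2 θ hc12
      · have hk2' : k ≤ 2*m := by omega
        exact ck_lift_tmul c (2*m) k hk (welt w1 w2 m ⊗ₜ[K] w1) w2 (mu θ k)
          (ih.2 k hk1 hk2')
    refine ⟨hA, ?_⟩
    intro k hk1 hk2
    by_cases hk : k = 2*m+2
    · subst hk
      have hpar : mu θ (2*m+2) = -θ := by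
        have : (2*m+2) % 2 = 0 := by omega
        simp [mu, this]
      rw [hpar]
      exact ck_last_tmul c (2*m+1) (welt w1 w2 m ⊗ₜ[K] w1) w2 w1 (-θ) hc21
    · have hk' : k ≠ 2*m+1+1 := by omega
      exact ck_lift_tmul c (2*m+1) k hk' (welt w1 w2 (m+1)) w1 (mu θ k)
        (hA k hk1 (by omega))

def sseq (θ : K) : ℕ → K
  | 0 => 1
  | j+1 => 1 + mu θ (j+1) * sseq θ j

lemma Sfrag_apply (θ : K) (c : V ⊗[K] V →ₗ[K] V ⊗[K] V) {N : ℕ} (x : ↥(TP K V N)) :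
    ∀ j : ℕ, (∀ k, 1 ≤ k → k ≤ j → (ck c N k) x = mu θ k • x) →
      (Sfrag c N j) x = sseq θ j • x := by
  intro j
  induction j with
  | zero =>
    intro _
    show (𝟙 (TP K V N) : TP K V N ⟶ TP K V N) x = sseq θ 0 • x
    simp [sseq]
  | succ j ihj =>
    intro hx
    show (𝟙 (TP K V N) + (Sfrag c N j ≫ ck c N (j+1))) x = sseq θ (j+1) • x
    have h1 : (𝟙 (TP K V N) + (Sfrag c N j ≫ ck c N (j+1))) x
        = x + (ck c N (j+1)) ((Sfrag c N j) x) := rfl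
    rw [h1, ihj (fun k hk1 hk2 => hx k hk1 (by omega)), map_smul,
      hx (j+1) (by omega) le_rfl, smul_smul]
    show _ = (1 + mu θ (j+1) * sseq θ j) • x
    rw [add_smul, one_smul, mul_comm]

lemma sseq_closed (θ : K) : ∀ n : ℕ,
    (1 + θ^2) * sseq θ (2*n) = 1 - θ + (-θ^2)^n * θ * (1 + θ) ∧
    (1 + θ^2) * sseq θ (2*n+1) = (1 + θ) * (1 - (-θ^2)^(n+1)) := by
  have hmuo : ∀ m : ℕ, mu θ (2*m+1) = θ := by
    intro m
    have h : (2*m+1) % 2 = 1 := by omega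
    simp [mu, h]
  have hmue : ∀ m : ℕ, mu θ (2*m+2) = -θ := by
    intro m
    have h : (2*m+2) % 2 = 0 := by omega
    simp [mu, h]
  intro n
  induction n with
  | zero =>
    constructor
    · show (1 + θ^2) * sseq θ 0 = _
      simp only [sseq]; ring
    · have h1 : sseq θ (2*0+1) = 1 + mu θ 1 * sseq θ 0 := rfl
      have h0 : sseq θ 0 = 1 := rfl
      rw [h1, h0, show mu θ 1 = θ from hmuo 0]
      ring
  | succ m ih =>
    have he : (1 + θ^2) * sseq θ (2*(m+1)) = 1 - θ + (-θ^2)^(m+1) * θ * (1 + θ) := by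
      have h2 : sseq θ (2*m+2) = 1 + mu θ (2*m+2) * sseq θ (2*m+1) := rfl
      have : (2:ℕ)*(m+1) = 2*m+2 := by ring
      rw [this, h2, hmue m]
      linear_combination (-θ) * ih.2
    refine ⟨he, ?_⟩
    have h3 : sseq θ (2*(m+1)+1) = 1 + mu θ (2*(m+1)+1) * sseq θ (2*(m+1)) := rfl
    rw [h3, hmuo (m+1)]
    linear_combination θ * he

end Aux

noncomputable section

open TensorProduct

/-- For the two-dimensional braided vector space with braiding
`c(w₁⊗w₁) = -θ w₂⊗w₂`, `c(w₁⊗w₂) = θ w₁⊗w₂`, `c(w₂⊗w₁) = -θ w₂⊗w₁`,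
`c(w₂⊗w₂) = θ w₁⊗w₁` (where `θ = (1/2)(i-1)(a+1)` and `a + 1 = ±√2`), the vectors
`(w₁⊗w₂)^{⊗n}` and `(w₁⊗w₂)^{⊗n} ⊗ w₁` are eigenvectors of the quantum
symmetrizers `S_{2n-1,1}` and `S_{2n,1}` with the indicated eigenvalues. -/
theorem quantum_symmetrizer_eigenvalues_W1a
    {K : Type*} [Field K] [CharZero K] [IsAlgClosed K]
    (i sq2 : K) (hi : i ^ 2 = -1) (hsq2 : sq2 ^ 2 = 2)
    (a : K) (ha : a + 1 = sq2 ∨ a + 1 = -sq2)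
    (θ : K) (hθ : θ = (2:K)⁻¹ * (i - 1) * (a + 1))
    (c : (K × K) ⊗[K] (K × K) →ₗ[K] (K × K) ⊗[K] (K × K))
    (hc11 : c (((1:K), (0:K)) ⊗ₜ[K] ((1:K), (0:K))) =
      (-θ) • (((0:K), (1:K)) ⊗ₜ[K] ((0:K), (1:K))))
    (hc12 : c (((1:K), (0:K)) ⊗ₜ[K] ((0:K), (1:K))) =
      θ • (((1:K), (0:K)) ⊗ₜ[K] ((0:K), (1:K))))
    (hc21 : c (((0:K), (1:K)) ⊗ₜ[K] ((1:K), (0:K))) =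
      (-θ) • (((0:K), (1:K)) ⊗ₜ[K] ((1:K), (0:K))))
    (hc22 : c (((0:K), (1:K)) ⊗ₜ[K] ((0:K), (1:K))) =
      θ • (((1:K), (0:K)) ⊗ₜ[K] ((1:K), (0:K)))) :
    ∀ n : ℕ, 1 ≤ n →
      Sfrag c (2*n) (2*n - 1) (welt ((1:K), (0:K)) ((0:K), (1:K)) n) =
        ((1 + θ) * (1 - (-θ^2)^n) / (1 + θ^2)) •
          welt ((1:K), (0:K)) ((0:K), (1:K)) n ∧
      Sfrag c (2*n+1) (2*n) ((welt ((1:K), (0:K)) ((0:K), (1:K)) n) ⊗ₜ[K] ((1:K), (0:K))) =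
        ((1 - θ + (-1:K)^n * θ^(2*n+1) * (1 + θ)) / (1 + θ^2)) •
          ((welt ((1:K), (0:K)) ((0:K), (1:K)) n) ⊗ₜ[K] ((1:K), (0:K))) := by
  have h2 : (a + 1)^2 = 2 := by
    rcases ha with h | h
    · rw [h]; exact hsq2
    · rw [h, neg_pow]; simp [hsq2]
  have hθ2 : θ^2 = -i := by
    rw [hθ]
    linear_combination ((4:K)⁻¹*(i-1)^2) * h2 + (2:K)⁻¹ * hi
  have hne : (1 : K) + θ^2 ≠ 0 := by
    rw [hθ2]
    intro h
    have h1 : i = 1 := by linear_combination -h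
    rw [h1, one_pow] at hi
    have h2' : (2:K) = 0 := by linear_combination hi
    exact two_ne_zero h2'
  intro n hn
  obtain ⟨m, rfl⟩ : ∃ m, n = m + 1 := ⟨n - 1, by omega⟩
  have E := eig θ ((1:K), (0:K)) ((0:K), (1:K)) c hc12 hc21
  constructor
  · rw [show 2*(m+1) - 1 = 2*m+1 from by omega]
    rw [Sfrag_apply θ c (welt ((1:K), (0:K)) ((0:K), (1:K)) (m+1)) (2*m+1)
      (fun k hk1 hk2 => (E (m+1)).1 k hk1 (by omega))]
    congr 1
    rw [eq_div_iff hne]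
    linear_combination (sseq_closed θ m).2
  · rw [Sfrag_apply θ c _ (2*(m+1))
      (fun k hk1 hk2 => (E (m+1)).2 k hk1 (by omega))]
    congr 1
    rw [eq_div_iff hne]
    linear_combination (sseq_closed θ (m+1)).1


end
end
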